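/- Let T₁, T₂ be completely positive maps X → B(H) and T = T₁ + T₂ with minimal Stinespring representation (π_T, K_T, V_T). If there is a projection P ∈ π_T(X)′ with T₁(x) = V_T* P π_T(x) V_T and T₂(x) = V_T*(1−P) π_T(x) V_T for all x, then any completely positive T′ with T′ ≤ T₁ and T′ ≤ T₂ is zero. -/

import Mathlib

open scoped ComplexOrder InnerProductSpace

noncomputable section

/-- A matrix over a star ring is positive if it is of the form `Nᴴ * N`. -/
def MatPos {A : Type*} [Ring A] [StarRing A] {n : ℕ}
    (M : Matrix (Fin n) (Fin n) A) : Prop :=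
  ∃ N : Matrix (Fin n) (Fin n) A, M = N.conjTranspose * N

/-- `T` is completely positive if the induced entrywise maps on matrices are positive. -/
def CompletelyPositiveFun {A B : Type*} [Ring A] [StarRing A] [Ring B] [StarRing B]
    (T : A → B) : Prop :=
  ∀ (n : ℕ) (M : Matrix (Fin n) (Fin n) A), MatPos M → MatPos (M.map T)

/-- `(π, K, V)` is a Stinespring representation of `T : X → B(H)`:
`T x = V* (π x) V` for all `x`. -/
def IsStinespring {X : Type*} [NormedRing X] [StarRing X] [CStarRing X]
    [NormedAlgebra ℂ X] [StarModule ℂ X]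
    {H K : Type*} [NormedAddCommGroup H] [InnerProductSpace ℂ H] [CompleteSpace H]
    [NormedAddCommGroup K] [InnerProductSpace ℂ K] [CompleteSpace K]
    (T : X → (H →L[ℂ] H)) (π : X →⋆ₐ[ℂ] (K →L[ℂ] K)) (V : H →L[ℂ] K) : Prop :=
  ∀ x : X, T x = (ContinuousLinearMap.adjoint V).comp ((π x).comp V)

/-- Minimality: the closed linear span of `π(X) V H` is all of `K`. -/
def IsMinimalStinespring {X : Type*} [NormedRing X] [StarRing X] [CStarRing X]
    [NormedAlgebra ℂ X] [StarModule ℂ X]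
    {H K : Type*} [NormedAddCommGroup H] [InnerProductSpace ℂ H] [CompleteSpace H]
    [NormedAddCommGroup K] [InnerProductSpace ℂ K] [CompleteSpace K]
    (π : X →⋆ₐ[ℂ] (K →L[ℂ] K)) (V : H →L[ℂ] K) : Prop :=
  (Submodule.span ℂ {k : K | ∃ (x : X) (h : H), k = π x (V h)}).topologicalClosure = ⊤

set_option linter.unusedSectionVars false

lemma cp_star_map {A B : Type*} [Ring A] [StarRing A] [Ring B] [StarRing B]
    {T : A → B} (hT : CompletelyPositiveFun T) (x : A) : T (star x) = star (T x) := by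
  set N : Matrix (Fin 2) (Fin 2) A := !![1, x; 0, 0] with hN
  obtain ⟨R, hR⟩ := hT 2 (N.conjTranspose * N) ⟨N, rfl⟩
  have hherm : ((N.conjTranspose * N).map T).conjTranspose = (N.conjTranspose * N).map T := by
    rw [hR, Matrix.conjTranspose_mul, Matrix.conjTranspose_conjTranspose]
  have h10 := congrFun (congrFun hherm 1) 0
  simp [Matrix.conjTranspose_apply, Matrix.map_apply, Matrix.mul_apply, Fin.sum_univ_two, hN] at h10
  exact h10.symm

lemma cp_pos_sum {X : Type*} [Ring X] [StarRing X]
    {H : Type*} [NormedAddCommGroup H] [InnerProductSpace ℂ H] [CompleteSpace H]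
    {T : X → (H →L[ℂ] H)} (hT : CompletelyPositiveFun T)
    {n : ℕ} (x : Fin n → X) (h : Fin n → H) :
    ∃ r : ℝ, 0 ≤ r ∧ ∑ i, ∑ j, ⟪h i, T (star (x i) * x j) (h j)⟫_ℂ = (r : ℂ) := by
  rcases n with _ | n
  · exact ⟨0, le_refl 0, by simp⟩
  set N : Matrix (Fin (n+1)) (Fin (n+1)) X := Matrix.of fun i j => if i = 0 then x j else 0 with hN
  have hM : ∀ i j, (N.conjTranspose * N) i j = star (x i) * x j := by
    intro i j
    simp [Matrix.mul_apply, Matrix.conjTranspose_apply, hN, apply_ite (star ·), ite_mul]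
  obtain ⟨R, hR⟩ := hT (n+1) (N.conjTranspose * N) ⟨N, rfl⟩
  have key : ∀ i j, T (star (x i) * x j) = ∑ k, star (R k i) * R k j := by
    intro i j
    have h1 := congrFun (congrFun hR i) j
    rw [Matrix.map_apply, hM i j] at h1
    rw [h1, Matrix.mul_apply]
    simp [Matrix.conjTranspose_apply]
  refine ⟨∑ k, ‖∑ i, R k i (h i)‖^2, by positivity, ?_⟩
  have step1 : ∑ i, ∑ j, ⟪h i, T (star (x i) * x j) (h j)⟫_ℂ
      = ∑ i, ∑ j, ∑ k, ⟪R k i (h i), R k j (h j)⟫_ℂ := by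
    refine Finset.sum_congr rfl fun i _ => Finset.sum_congr rfl fun j _ => ?_
    rw [key i j]
    simp [ContinuousLinearMap.sum_apply, inner_sum, ContinuousLinearMap.mul_apply,
      ContinuousLinearMap.star_eq_adjoint, ContinuousLinearMap.adjoint_inner_right]
  rw [step1]
  have step2 : ∑ i, ∑ j, ∑ k, ⟪R k i (h i), R k j (h j)⟫_ℂ
      = ∑ k, ∑ i, ∑ j, ⟪R k i (h i), R k j (h j)⟫_ℂ := by
    rw [show (∑ i, ∑ j, ∑ k, ⟪R k i (h i), R k j (h j)⟫_ℂ)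
        = ∑ i, ∑ k, ∑ j, ⟪R k i (h i), R k j (h j)⟫_ℂ from
      Finset.sum_congr rfl fun i _ => Finset.sum_comm]
    exact Finset.sum_comm
  rw [step2]
  have step3 : ∀ k, ∑ i, ∑ j, ⟪R k i (h i), R k j (h j)⟫_ℂ
      = ((‖∑ i, R k i (h i)‖^2 : ℝ) : ℂ) := by
    intro k
    simp_rw [← inner_sum]
    rw [← sum_inner, inner_self_eq_norm_sq_to_K]
    norm_cast
  simp_rw [step3]
  push_cast
  ring


def Bf {X : Type*} [Ring X] [StarRing X]
    {H : Type*} [NormedAddCommGroup H] [InnerProductSpace ℂ H]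
    (T : X → (H →L[ℂ] H)) {n m : ℕ} (x : Fin n → X) (h : Fin n → H)
    (y : Fin m → X) (g : Fin m → H) : ℂ :=
  ∑ i, ∑ j, ⟪h i, T (star (x i) * y j) (g j)⟫_ℂ

section Bf
variable {X : Type*} [Ring X] [StarRing X]
    {H : Type*} [NormedAddCommGroup H] [InnerProductSpace ℂ H] [CompleteSpace H]

lemma Bf_conj {T : X → (H →L[ℂ] H)} (hT : CompletelyPositiveFun T)
    {n m : ℕ} (x : Fin n → X) (h : Fin n → H) (y : Fin m → X) (g : Fin m → H) :
    (starRingEnd ℂ) (Bf T x h y g) = Bf T y g x h := by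
  simp only [Bf, map_sum]
  rw [Finset.sum_comm]
  refine Finset.sum_congr rfl fun j _ => Finset.sum_congr rfl fun i _ => ?_
  rw [inner_conj_symm]
  have h1 : T (star (x i) * y j) = ContinuousLinearMap.adjoint (T (star (y j) * x i)) := by
    rw [← ContinuousLinearMap.star_eq_adjoint, ← cp_star_map hT]
    congr 1
    simp [star_mul]
  rw [h1]
  exact ContinuousLinearMap.adjoint_inner_left _ _ _

lemma Bf_smul_right (T : X → (H →L[ℂ] H)) {n m : ℕ} (x : Fin n → X) (h : Fin n → H)
    (y : Fin m → X) (g : Fin m → H) (c : ℂ) :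
    Bf T x h y (fun j => c • g j) = c * Bf T x h y g := by
  simp [Bf, inner_smul_right, Finset.mul_sum]

lemma Bf_smul_left (T : X → (H →L[ℂ] H)) {n m : ℕ} (x : Fin n → X) (h : Fin n → H)
    (y : Fin m → X) (g : Fin m → H) (c : ℂ) :
    Bf T x (fun i => c • h i) y g = (starRingEnd ℂ) c * Bf T x h y g := by
  simp [Bf, inner_smul_left, Finset.mul_sum, mul_comm]

lemma Bf_append (T : X → (H →L[ℂ] H)) {n m n' m' : ℕ}
    (x : Fin n → X) (h : Fin n → H) (y : Fin m → X) (g : Fin m → H)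
    (x' : Fin n' → X) (h' : Fin n' → H) (y' : Fin m' → X) (g' : Fin m' → H) :
    Bf T (Fin.append x y) (Fin.append h g) (Fin.append x' y') (Fin.append h' g')
      = Bf T x h x' h' + Bf T x h y' g' + Bf T y g x' h' + Bf T y g y' g' := by
  simp only [Bf, Fin.sum_univ_add, Fin.append_left, Fin.append_right, Finset.sum_add_distrib]
  ring

lemma Bf_cs {T : X → (H →L[ℂ] H)} (hT : CompletelyPositiveFun T)
    {n m : ℕ} (x : Fin n → X) (h : Fin n → H) (y : Fin m → X) (g : Fin m → H) :
    ‖Bf T x h y g‖ ^ 2 ≤ (Bf T x h x h).re * (Bf T y g y g).re := by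
  obtain ⟨qu, hqu0, hqu⟩ := cp_pos_sum hT x h
  obtain ⟨qv, hqv0, hqv⟩ := cp_pos_sum hT y g
  have hqu' : Bf T x h x h = (qu : ℂ) := hqu
  have hqv' : Bf T y g y g = (qv : ℂ) := hqv
  rw [hqu', hqv', Complex.ofReal_re, Complex.ofReal_re]
  set b := Bf T x h y g with hb
  have key : ∀ t : ℝ, 0 ≤ qu + 2 * t * ‖b‖ ^ 2 + t ^ 2 * ‖b‖ ^ 2 * qv := by
    intro t
    set c : ℂ := (t : ℂ) * (starRingEnd ℂ) b with hc
    obtain ⟨r, hr0, hr⟩ := cp_pos_sum hT (Fin.append x y) (Fin.append h (fun j => c • g j))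
    have expand : Bf T (Fin.append x y) (Fin.append h (fun j => c • g j))
        (Fin.append x y) (Fin.append h (fun j => c • g j)) = (r : ℂ) := hr
    rw [Bf_append] at expand
    rw [Bf_smul_right, Bf_smul_left, Bf_smul_left, Bf_smul_right,
      (Bf_conj hT x h y g).symm, hqu', hqv', ← hb] at expand
    have hc1 : c * b = ((t * ‖b‖ ^ 2 : ℝ) : ℂ) := by
      rw [hc, mul_assoc, mul_comm ((starRingEnd ℂ) b) b, Complex.mul_conj']
      push_cast
      ring
    have hc2 : (starRingEnd ℂ) c * (starRingEnd ℂ) b = ((t * ‖b‖ ^ 2 : ℝ) : ℂ) := by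
      rw [← map_mul, hc1]
      exact Complex.conj_ofReal _
    have hc3' : (starRingEnd ℂ) c * c = ((t ^ 2 * ‖b‖ ^ 2 : ℝ) : ℂ) := by
      rw [mul_comm, Complex.mul_conj', hc, norm_mul, Complex.norm_real, RCLike.norm_conj]
      push_cast
      norm_cast
      rw [Real.norm_eq_abs]
      nlinarith [sq_abs t, abs_nonneg t, norm_nonneg b]
    have hc3 : (starRingEnd ℂ) c * (c * (qv : ℂ)) = ((t ^ 2 * ‖b‖ ^ 2 * qv : ℝ) : ℂ) := by
      rw [← mul_assoc, hc3']
      push_cast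
      ring
    rw [hc1, hc2, hc3] at expand
    have hre : ((qu + t * ‖b‖ ^ 2 + t * ‖b‖ ^ 2 + t ^ 2 * ‖b‖ ^ 2 * qv : ℝ) : ℂ) = (r : ℂ) := by
      rw [← expand]
      push_cast
      ring
    have hreal := Complex.ofReal_inj.mp hre
    linarith
  rcases eq_or_lt_of_le hqv0 with hv0 | hv0
  · have hb0 : ‖b‖ = 0 := by
      by_contra hbne
      have hbpos : 0 < ‖b‖ ^ 2 :=
        pow_pos (lt_of_le_of_ne (norm_nonneg b) (Ne.symm hbne)) 2
      have hk := key (-(qu + 1) / (2 * ‖b‖ ^ 2))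
      rw [← hv0] at hk
      have h2 : 2 * (-(qu + 1) / (2 * ‖b‖ ^ 2)) * ‖b‖ ^ 2 = -(qu + 1) := by
        have e : (2:ℝ) * (-(qu + 1) / (2 * ‖b‖ ^ 2)) * ‖b‖ ^ 2
            = (-(qu + 1) / (2 * ‖b‖ ^ 2)) * (2 * ‖b‖ ^ 2) := by ring
        rw [e, div_mul_cancel₀]
        exact (by positivity : (0:ℝ) < 2 * ‖b‖ ^ 2).ne'
      nlinarith [hk]
    rw [hb0]
    simpa using mul_nonneg hqu0 hqv0
  · have hk := key (-1 / qv)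
    have e1 : (-1 / qv) ^ 2 * ‖b‖ ^ 2 * qv = ‖b‖ ^ 2 / qv := by
      field_simp
    have e2 : 2 * (-1 / qv) * ‖b‖ ^ 2 = -(2 * (‖b‖ ^ 2 / qv)) := by ring
    rw [e1, e2] at hk
    have h3 : ‖b‖ ^ 2 / qv ≤ qu := by linarith
    calc ‖b‖ ^ 2 = ‖b‖ ^ 2 / qv * qv := by field_simp
    _ ≤ qu * qv := mul_le_mul_of_nonneg_right h3 (le_of_lt hv0)
end Bf

section lemmas
variable {X : Type*} [Ring X] [StarRing X]
    {H : Type*} [NormedAddCommGroup H] [InnerProductSpace ℂ H]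

lemma Bf_sub (S T : X → (H →L[ℂ] H)) {n m : ℕ} (x : Fin n → X) (h : Fin n → H)
    (y : Fin m → X) (g : Fin m → H) :
    Bf (fun a => S a - T a) x h y g = Bf S x h y g - Bf T x h y g := by
  simp [Bf, ContinuousLinearMap.sub_apply, inner_sub_right, Finset.sum_sub_distrib]

lemma Bf_neg_left (T : X → (H →L[ℂ] H)) {n m : ℕ} (x : Fin n → X) (h : Fin n → H)
    (y : Fin m → X) (g : Fin m → H) :
    Bf T x (fun i => -(h i)) y g = -(Bf T x h y g) := by
  simp [Bf, inner_neg_left, Finset.sum_neg_distrib]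

lemma Bf_append_left (T : X → (H →L[ℂ] H)) {n m n' : ℕ}
    (x : Fin n → X) (h : Fin n → H) (y : Fin m → X) (g : Fin m → H)
    (x' : Fin n' → X) (h' : Fin n' → H) :
    Bf T (Fin.append x y) (Fin.append h g) x' h'
      = Bf T x h x' h' + Bf T y g x' h' := by
  simp [Bf, Fin.sum_univ_add, Fin.append_left, Fin.append_right, Finset.sum_add_distrib]

end lemmas

lemma proj_contract {K : Type*} [NormedAddCommGroup K] [InnerProductSpace ℂ K] [CompleteSpace K]
    {Q : K →L[ℂ] K} (hproj : IsIdempotentElem Q) (hsa : IsSelfAdjoint Q) (w : K) :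
    ‖Q w‖ ≤ ‖w‖ := by
  have hadj : ContinuousLinearMap.adjoint Q = Q := by
    rw [← ContinuousLinearMap.star_eq_adjoint]; exact hsa
  have hQQ : Q (Q w) = Q w := by
    have := ContinuousLinearMap.ext_iff.mp hproj w
    simpa [ContinuousLinearMap.mul_apply] using this
  have h1 : ⟪Q w, Q w⟫_ℂ = ⟪w, Q w⟫_ℂ := by
    calc ⟪Q w, Q w⟫_ℂ = ⟪w, ContinuousLinearMap.adjoint Q (Q w)⟫_ℂ :=
          (ContinuousLinearMap.adjoint_inner_right Q w (Q w)).symm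
    _ = ⟪w, Q w⟫_ℂ := by rw [hadj, hQQ]
  have h2 : ‖Q w‖ ^ 2 = RCLike.re ⟪w, Q w⟫_ℂ := by
    rw [← h1, inner_self_eq_norm_sq]
  have h3 : RCLike.re ⟪w, Q w⟫_ℂ ≤ ‖⟪w, Q w⟫_ℂ‖ := RCLike.re_le_norm _
  have h4 : ‖⟪w, Q w⟫_ℂ‖ ≤ ‖w‖ * ‖Q w‖ := norm_inner_le_norm _ _
  by_contra hcon
  push_neg at hcon
  nlinarith [norm_nonneg (Q w), norm_nonneg w]

section cstar
variable {X : Type*} [NormedRing X] [StarRing X] [CStarRing X]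
    [NormedAlgebra ℂ X] [StarModule ℂ X]
    {H K : Type*} [NormedAddCommGroup H] [InnerProductSpace ℂ H] [CompleteSpace H]
    [NormedAddCommGroup K] [InnerProductSpace ℂ K] [CompleteSpace K]

lemma Bf_proj_bound (T₁ : X →ₗ[ℂ] (H →L[ℂ] H)) (π : X →⋆ₐ[ℂ] (K →L[ℂ] K)) (V : H →L[ℂ] K)
    (P : K →L[ℂ] K) (hproj : IsIdempotentElem P) (hsa : IsSelfAdjoint P)
    (hcomm : ∀ x : X, P * π x = π x * P)
    (h₁ : ∀ x : X, T₁ x = (ContinuousLinearMap.adjoint V).comp (P.comp ((π x).comp V)))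
    {n : ℕ} (x : Fin n → X) (h : Fin n → H) :
    Bf (⇑T₁) x h x h = ((‖P (∑ i, π (x i) (V (h i)))‖ ^ 2 : ℝ) : ℂ) := by
  have hadj : ContinuousLinearMap.adjoint P = P := by
    rw [← ContinuousLinearMap.star_eq_adjoint]; exact hsa
  have hterm : ∀ i j, ⟪h i, T₁ (star (x i) * x j) (h j)⟫_ℂ
      = ⟪P (π (x i) (V (h i))), P (π (x j) (V (h j)))⟫_ℂ := by
    intro i j
    rw [h₁]
    simp only [ContinuousLinearMap.comp_apply]
    rw [ContinuousLinearMap.adjoint_inner_right, map_mul, map_star]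
    have hc2 : P * (star (π (x i)) * π (x j)) = star (π (x i)) * (P * π (x j)) := by
      have hcs : P * star (π (x i)) = star (π (x i)) * P := by
        have := congrArg star (hcomm (x i))
        simpa [star_mul, hsa.star_eq] using this.symm
      rw [← mul_assoc, hcs, mul_assoc]
    have e1 : P ((star (π (x i)) * π (x j)) (V (h j)))
        = (ContinuousLinearMap.adjoint (π (x i))) (P (π (x j) (V (h j)))) := by
      have := ContinuousLinearMap.ext_iff.mp hc2 (V (h j))
      simpa [ContinuousLinearMap.mul_apply, ContinuousLinearMap.star_eq_adjoint] using this
    rw [e1, ContinuousLinearMap.adjoint_inner_right]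
    have hPP : P (P (π (x j) (V (h j)))) = P (π (x j) (V (h j))) := by
      have := ContinuousLinearMap.ext_iff.mp hproj (π (x j) (V (h j)))
      simpa [ContinuousLinearMap.mul_apply] using this
    calc ⟪π (x i) (V (h i)), P (π (x j) (V (h j)))⟫_ℂ
        = ⟪π (x i) (V (h i)), P (P (π (x j) (V (h j))))⟫_ℂ := by rw [hPP]
    _ = ⟪ContinuousLinearMap.adjoint P (π (x i) (V (h i))), P (π (x j) (V (h j)))⟫_ℂ := by
          rw [ContinuousLinearMap.adjoint_inner_left]
    _ = ⟪P (π (x i) (V (h i))), P (π (x j) (V (h j)))⟫_ℂ := by rw [hadj]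
  calc Bf (⇑T₁) x h x h
      = ∑ i, ∑ j, ⟪P (π (x i) (V (h i))), P (π (x j) (V (h j)))⟫_ℂ :=
        Finset.sum_congr rfl fun i _ => Finset.sum_congr rfl fun j _ => hterm i j
  _ = ⟪P (∑ i, π (x i) (V (h i))), P (∑ j, π (x j) (V (h j)))⟫_ℂ := by
        rw [map_sum, sum_inner]
        simp_rw [inner_sum]
  _ = ((‖P (∑ i, π (x i) (V (h i)))‖ ^ 2 : ℝ) : ℂ) := by
        rw [inner_self_eq_norm_sq_to_K]
        norm_cast

lemma Bf_le_proj (T₁ T' : X →ₗ[ℂ] (H →L[ℂ] H))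
    (hd : CompletelyPositiveFun (fun a => T₁ a - T' a))
    (π : X →⋆ₐ[ℂ] (K →L[ℂ] K)) (V : H →L[ℂ] K)
    (P : K →L[ℂ] K) (hproj : IsIdempotentElem P) (hsa : IsSelfAdjoint P)
    (hcomm : ∀ x : X, P * π x = π x * P)
    (h₁ : ∀ x : X, T₁ x = (ContinuousLinearMap.adjoint V).comp (P.comp ((π x).comp V)))
    {n : ℕ} (x : Fin n → X) (h : Fin n → H) {q : ℝ}
    (hq : Bf (⇑T') x h x h = (q : ℂ)) :
    q ≤ ‖P (∑ i, π (x i) (V (h i)))‖ ^ 2 := by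
  obtain ⟨r, hr0, hr⟩ := cp_pos_sum hd x h
  have hr' : Bf (fun a => T₁ a - T' a) x h x h = (r : ℂ) := hr
  rw [Bf_sub, Bf_proj_bound T₁ π V P hproj hsa hcomm h₁ x h, hq] at hr'
  have : ‖P (∑ i, π (x i) (V (h i)))‖ ^ 2 - q = r := by exact_mod_cast hr'
  linarith

lemma span_repr (π : X →⋆ₐ[ℂ] (K →L[ℂ] K)) (V : H →L[ℂ] K) (w : K)
    (hw : w ∈ Submodule.span ℂ {k : K | ∃ (x : X) (h : H), k = π x (V h)}) :
    ∃ (n : ℕ) (x : Fin n → X) (h : Fin n → H), w = ∑ i, π (x i) (V (h i)) := by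
  induction hw using Submodule.span_induction with
  | mem k hk =>
      obtain ⟨a, v, rfl⟩ := hk
      exact ⟨1, fun _ => a, fun _ => v, by simp⟩
  | zero => exact ⟨0, Fin.elim0, Fin.elim0, by simp⟩
  | add u v hu hv ihu ihv =>
      obtain ⟨n, xa, ha, rfl⟩ := ihu
      obtain ⟨m, xb, hb, rfl⟩ := ihv
      refine ⟨n + m, Fin.append xa xb, Fin.append ha hb, ?_⟩
      rw [Fin.sum_univ_add]
      simp [Fin.append_left, Fin.append_right]
  | smul c u hu ihu =>
      obtain ⟨n, xa, ha, rfl⟩ := ihu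
      refine ⟨n, fun i => c • xa i, ha, ?_⟩
      simp [Finset.smul_sum, map_smul]

end cstar


/-- If `T = T₁ + T₂` with minimal Stinespring representation `(π, K, V)` and a projection
`P ∈ π(X)′` implements `T₁` and `T₂`, then any CP map `T'` with `T' ≤ T₁` and `T' ≤ T₂`
is zero. -/
theorem cp_orthogonal_of_projection
    {X : Type*} [NormedRing X] [StarRing X] [CStarRing X]
    [NormedAlgebra ℂ X] [StarModule ℂ X]
    {H K : Type*} [NormedAddCommGroup H] [InnerProductSpace ℂ H] [CompleteSpace H]
    [NormedAddCommGroup K] [InnerProductSpace ℂ K] [CompleteSpace K]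
    (T₁ T₂ : X →ₗ[ℂ] (H →L[ℂ] H))
    (hT₁ : CompletelyPositiveFun (⇑T₁)) (hT₂ : CompletelyPositiveFun (⇑T₂))
    (π : X →⋆ₐ[ℂ] (K →L[ℂ] K)) (V : H →L[ℂ] K)
    (hst : IsStinespring (fun x => T₁ x + T₂ x) π V) (hmin : IsMinimalStinespring π V)
    (P : K →L[ℂ] K) (hproj : IsIdempotentElem P) (hsa : IsSelfAdjoint P)
    (hcomm : ∀ x : X, P * π x = π x * P)
    (h₁ : ∀ x : X, T₁ x = (ContinuousLinearMap.adjoint V).comp (P.comp ((π x).comp V)))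
    (h₂ : ∀ x : X, T₂ x =
      (ContinuousLinearMap.adjoint V).comp ((1 - P).comp ((π x).comp V))) :
    ∀ T' : X →ₗ[ℂ] (H →L[ℂ] H), CompletelyPositiveFun (⇑T') →
      CompletelyPositiveFun (fun x => T₁ x - T' x) →
      CompletelyPositiveFun (fun x => T₂ x - T' x) →
      T' = 0 := by
  intro T' hT' hd1 hd2
  have hproj1 : IsIdempotentElem ((1 : K →L[ℂ] K) - P) := hproj.one_sub
  have hsa1 : IsSelfAdjoint ((1 : K →L[ℂ] K) - P) := (IsSelfAdjoint.one _).sub hsa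
  have hcomm1 : ∀ a : X, ((1 : K →L[ℂ] K) - P) * π a = π a * ((1 : K →L[ℂ] K) - P) := by
    intro a
    rw [sub_mul, mul_sub, one_mul, mul_one, hcomm]
  have hPP : ∀ w : K, P (P w) = P w := by
    intro w
    have := ContinuousLinearMap.ext_iff.mp hproj w
    simpa [ContinuousLinearMap.mul_apply] using this
  -- main claim: the quadratic form of T' vanishes on all families
  have Qzero : ∀ (n : ℕ) (x : Fin n → X) (h : Fin n → H), Bf (⇑T') x h x h = 0 := by
    intro n x h
    obtain ⟨q, hq0, hq⟩ := cp_pos_sum hT' x h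
    have hq' : Bf (⇑T') x h x h = (q : ℂ) := hq
    rw [hq']
    norm_cast
    by_contra hne
    have hqpos : 0 < q := lt_of_le_of_ne hq0 (Ne.symm hne)
    set k : K := ∑ i, π (x i) (V (h i)) with hk
    set ε : ℝ := Real.sqrt q / 4 with hε
    have hsq : 0 < Real.sqrt q := Real.sqrt_pos.mpr hqpos
    have hεpos : 0 < ε := by positivity
    have hPk : P k ∈ closure
        ((Submodule.span ℂ {w : K | ∃ (a : X) (v : H), w = π a (V v)} : Submodule ℂ K) : Set K) := by
      have hmem : P k ∈ (Submodule.span ℂ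
          {w : K | ∃ (a : X) (v : H), w = π a (V v)}).topologicalClosure := by
        rw [hmin]; exact Submodule.mem_top
      exact hmem
    obtain ⟨w, hw_mem, hw_dist⟩ := Metric.mem_closure_iff.mp hPk ε hεpos
    obtain ⟨m, y, g, rfl⟩ := span_repr π V w hw_mem
    set ku : K := ∑ j, π (y j) (V (g j)) with hku
    have hdist : ‖ku - P k‖ < ε := by
      rw [← dist_eq_norm, dist_comm]
      exact hw_dist
    -- bound for the u-family using T₂ and 1 - P
    obtain ⟨qU, hqU0, hqU⟩ := cp_pos_sum hT' y g
    have hqU' : Bf (⇑T') y g y g = (qU : ℂ) := hqU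
    have bndU : qU ≤ ‖((1 : K →L[ℂ] K) - P) ku‖ ^ 2 := by
      have := Bf_le_proj T₂ T' hd2 π V ((1 : K →L[ℂ] K) - P) hproj1 hsa1 hcomm1 h₂ y g hqU'
      rwa [← hku] at this
    have estU : ‖((1 : K →L[ℂ] K) - P) ku‖ < ε := by
      have e0 : ((1 : K →L[ℂ] K) - P) ku = ((1 : K →L[ℂ] K) - P) (ku - P k) := by
        simp only [ContinuousLinearMap.sub_apply, ContinuousLinearMap.one_apply, map_sub]
        rw [hPP k]
        abel
      rw [e0]
      exact lt_of_le_of_lt (proj_contract hproj1 hsa1 _) hdist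
    -- the difference family d = u ++ (-v)
    set xd : Fin (m + n) → X := Fin.append y x with hxd
    set hd : Fin (m + n) → H := Fin.append g (fun i => -(h i)) with hhd
    have hkd : ∑ i, π (xd i) (V (hd i)) = ku - k := by
      rw [Fin.sum_univ_add]
      simp only [hxd, hhd, Fin.append_left, Fin.append_right, map_neg]
      rw [Finset.sum_neg_distrib, ← hku, ← hk]
      exact (sub_eq_add_neg ku k).symm
    obtain ⟨qD, hqD0, hqD⟩ := cp_pos_sum hT' xd hd
    have hqD' : Bf (⇑T') xd hd xd hd = (qD : ℂ) := hqD
    have bndD : qD ≤ ‖P (ku - k)‖ ^ 2 := by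
      have := Bf_le_proj T₁ T' hd1 π V P hproj hsa hcomm h₁ xd hd hqD'
      rwa [hkd] at this
    have estD : ‖P (ku - k)‖ < ε := by
      have e0 : P (ku - k) = P (ku - P k) := by
        simp only [map_sub]
        rw [hPP k]
      rw [e0]
      exact lt_of_le_of_lt (proj_contract hproj hsa _) hdist
    -- Cauchy-Schwarz bounds
    set B1 : ℂ := Bf (⇑T') y g x h with hB1
    set B2 : ℂ := Bf (⇑T') xd hd x h with hB2
    have cs1 : ‖B1‖ ^ 2 ≤ qU * q := by
      have := Bf_cs hT' y g x h
      rwa [hqU', hq', Complex.ofReal_re, Complex.ofReal_re] at this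
    have cs2 : ‖B2‖ ^ 2 ≤ qD * q := by
      have := Bf_cs hT' xd hd x h
      rwa [hqD', hq', Complex.ofReal_re, Complex.ofReal_re] at this
    have decomp : B2 = B1 - (q : ℂ) := by
      rw [hB2, hxd, hhd, Bf_append_left, Bf_neg_left, hq', ← hB1]
      ring
    have hqle : q ≤ ‖B1‖ + ‖B2‖ := by
      have e1 : (q : ℂ) = B1 - B2 := by rw [decomp]; ring
      calc q = ‖(q : ℂ)‖ := by rw [Complex.norm_real, Real.norm_eq_abs, abs_of_nonneg hq0]
      _ = ‖B1 - B2‖ := by rw [e1]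
      _ ≤ ‖B1‖ + ‖B2‖ := norm_sub_le _ _
    -- put the numbers together
    have estU2 : ‖((1 : K →L[ℂ] K) - P) ku‖ ^ 2 ≤ ε ^ 2 := by
      nlinarith [norm_nonneg (((1 : K →L[ℂ] K) - P) ku), hεpos]
    have estD2 : ‖P (ku - k)‖ ^ 2 ≤ ε ^ 2 := by
      nlinarith [norm_nonneg (P (ku - k)), hεpos]
    have hB1' : ‖B1‖ ^ 2 ≤ ε ^ 2 * q :=
      le_trans cs1 (mul_le_mul_of_nonneg_right (le_trans bndU estU2) hq0)
    have hB2' : ‖B2‖ ^ 2 ≤ ε ^ 2 * q :=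
      le_trans cs2 (mul_le_mul_of_nonneg_right (le_trans bndD estD2) hq0)
    have hsqq : Real.sqrt q ^ 2 = q := Real.sq_sqrt hq0
    have hεq : (ε * Real.sqrt q) ^ 2 = ε ^ 2 * q := by rw [mul_pow, hsqq]
    have b1le : ‖B1‖ ≤ ε * Real.sqrt q := by
      refine (pow_le_pow_iff_left₀ (norm_nonneg B1) (by positivity) two_ne_zero).mp ?_
      rw [hεq]; exact hB1'
    have b2le : ‖B2‖ ≤ ε * Real.sqrt q := by
      refine (pow_le_pow_iff_left₀ (norm_nonneg B2) (by positivity) two_ne_zero).mp ?_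
      rw [hεq]; exact hB2'
    have hεsq : ε * Real.sqrt q = q / 4 := by
      rw [hε, div_mul_eq_mul_div, Real.mul_self_sqrt hq0]
    rw [hεsq] at b1le b2le
    linarith
  -- conclude T' = 0
  apply LinearMap.ext
  intro a
  apply ContinuousLinearMap.ext
  intro v
  have hz : ∀ g : H, ⟪g, T' a v⟫_ℂ = 0 := by
    intro g
    have hcs := Bf_cs hT' (fun _ : Fin 1 => (1 : X)) (fun _ => g)
      (fun _ : Fin 1 => a) (fun _ => v)
    rw [Qzero 1 (fun _ => a) (fun _ => v)] at hcs
    have hb : Bf (⇑T') (fun _ : Fin 1 => (1 : X)) (fun _ => g)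
        (fun _ : Fin 1 => a) (fun _ => v) = ⟪g, T' a v⟫_ℂ := by
      simp [Bf]
    rw [hb] at hcs
    simp only [Complex.zero_re, mul_zero] at hcs
    have : ‖⟪g, T' a v⟫_ℂ‖ = 0 := by nlinarith [norm_nonneg ⟪g, T' a v⟫_ℂ]
    exact norm_eq_zero.mp this
  have h0 := hz (T' a v)
  rw [inner_self_eq_zero] at h0
  simpa using h0
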